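/- Fix k₁, k₂ ∈ ℕ and let Σ be a (k₁+k₂)-graph with degree map d (identifying ℕ^{k₁+k₂} with ℕ^{k₁} × ℕ^{k₂}). Let Λ be the class of morphisms of Σ with degree in ℕ^{k₁} × {0} and Γ the class of morphisms with degree in {0} × ℕ^{k₂}. Then: Λ and Γ are wide subcategories of Σ (contain all identities and are closed under composition), and with the evident degree maps Λ is a k₁-graph and Γ is a k₂-graph; there are unique maps ◁ and ▷, assigning to each composable pair (λ, γ) ∈ Λ × Γ with source(λ) = range(γ) elements λ ◁ γ ∈ Γ and λ ▷ γ ∈ Λ with λ ∘ γ = (λ ◁ γ) ∘ (λ ▷ γ) in Σ; these maps form a matched pair structure on (Λ, Γ); the functor (γ, λ) ↦ γ ∘ λ is an isomorphism of categories Λ ⋈ Γ ≅ Σ; and d(λ ◁ γ) = d(γ) and d(λ ▷ γ) = d(λ) for all such pairs. -/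

import Mathlib

open CategoryTheory

universe v u

/-- A matched pair of small-category structures `C`, `D` on a common object type `V`.
A `C`-morphism `c : m ⟶ y` (source `m`, range `y`) and a `D`-morphism `d : z ⟶ m` determine
an object `w c d`, a `D`-morphism `c ◁ d : w c d ⟶ y` and a `C`-morphism `c ▷ d : z ⟶ w c d`.
Morphism equations across different intermediate objects are expressed with `HEq`. -/
structure MatchedPair (V : Type u) (C : Category.{v} V) (D : Category.{v} V) where
  w : ∀ {z m y : V}, C.Hom m y → D.Hom z m → V
  la : ∀ {z m y : V} (c : C.Hom m y) (d : D.Hom z m), D.Hom (w c d) y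
  ra : ∀ {z m y : V} (c : C.Hom m y) (d : D.Hom z m), C.Hom z (w c d)
  w_id_left : ∀ {z m : V} (d : D.Hom z m), w (C.id m) d = z
  la_id_left : ∀ {z m : V} (d : D.Hom z m), HEq (la (C.id m) d) d
  ra_id_left : ∀ {z m : V} (d : D.Hom z m), HEq (ra (C.id m) d) (C.id z)
  w_id_right : ∀ {m y : V} (c : C.Hom m y), w c (D.id m) = y
  la_id_right : ∀ {m y : V} (c : C.Hom m y), HEq (la c (D.id m)) (D.id y)
  ra_id_right : ∀ {m y : V} (c : C.Hom m y), HEq (ra c (D.id m)) c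
  w_comp_left : ∀ {z m k y : V} (c₁ : C.Hom k y) (c₂ : C.Hom m k) (d : D.Hom z m),
      w (C.comp c₂ c₁) d = w c₁ (la c₂ d)
  la_comp_left : ∀ {z m k y : V} (c₁ : C.Hom k y) (c₂ : C.Hom m k) (d : D.Hom z m),
      HEq (la (C.comp c₂ c₁) d) (la c₁ (la c₂ d))
  ra_comp_left : ∀ {z m k y : V} (c₁ : C.Hom k y) (c₂ : C.Hom m k) (d : D.Hom z m),
      HEq (ra (C.comp c₂ c₁) d) (C.comp (ra c₂ d) (ra c₁ (la c₂ d)))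
  w_comp_right : ∀ {z k m y : V} (c : C.Hom m y) (d₁ : D.Hom k m) (d₂ : D.Hom z k),
      w c (D.comp d₂ d₁) = w (ra c d₁) d₂
  la_comp_right : ∀ {z k m y : V} (c : C.Hom m y) (d₁ : D.Hom k m) (d₂ : D.Hom z k),
      HEq (la c (D.comp d₂ d₁)) (D.comp (la (ra c d₁) d₂) (la c d₁))
  ra_comp_right : ∀ {z k m y : V} (c : C.Hom m y) (d₁ : D.Hom k m) (d₂ : D.Hom z k),
      HEq (ra c (D.comp d₂ d₁)) (ra (ra c d₁) d₂)

namespace MatchedPair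

variable {V : Type u} {C D : Category.{v} V}

/-- Morphisms `z ⟶ y` of the Zappa–Szép product `𝒞 ⋈ 𝒟`: pairs `(d, c)` with
`c : z ⟶ m` a `𝒞`-morphism and `d : m ⟶ y` a `𝒟`-morphism. -/
def ZSHom (_M : MatchedPair V C D) (z y : V) : Type (max u v) := Σ m : V, D.Hom m y × C.Hom z m

/-- The identity `(id_x, id_x)` of `𝒞 ⋈ 𝒟` at `x`. -/
def zsId (M : MatchedPair V C D) (x : V) : M.ZSHom x x := ⟨x, (D.id x, C.id x)⟩

/-- Composition in `𝒞 ⋈ 𝒟`: `(d₁, c₁) ∘ (d₂, c₂) = (d₁ ∘ (c₁ ◁ d₂), (c₁ ▷ d₂) ∘ c₂)`. -/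
def zsComp (M : MatchedPair V C D) {z m y : V} (f : M.ZSHom m y) (g : M.ZSHom z m) : M.ZSHom z y :=
  ⟨M.w f.2.2 g.2.1, (D.comp (M.la f.2.2 g.2.1) f.2.1, C.comp g.2.2 (M.ra f.2.2 g.2.1))⟩

/-- The canonical embedding `ι_𝒞 : 𝒞 → 𝒞 ⋈ 𝒟`, `c ↦ (id_{range c}, c)`. -/
def iotaC (M : MatchedPair V C D) {z m : V} (c : C.Hom z m) : M.ZSHom z m := ⟨m, (D.id m, c)⟩

/-- The canonical embedding `ι_𝒟 : 𝒟 → 𝒞 ⋈ 𝒟`, `d ↦ (d, id_{source d})`. -/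
def iotaD (M : MatchedPair V C D) {m y : V} (d : D.Hom m y) : M.ZSHom m y := ⟨m, (d, C.id m)⟩

end MatchedPair

universe w

/-- `deg` makes the category `cV` a (generalised) higher-rank graph with degrees in the
additive commutative monoid `N`: `deg` is functorial and satisfies the unique factorisation
property.  (For `N = ℕ^k` this is the definition of a `k`-graph; in the factorisation
`f = μ ∘ ν`, the morphism `ν` is applied first.) -/
def IsKGraphDeg (V : Type u) (cV : Category.{v} V) {N : Type w} [AddCommMonoid N]
    (deg : ∀ ⦃x y : V⦄, cV.Hom x y → N) : Prop :=
  (∀ x : V, deg (cV.id x) = 0) ∧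
  (∀ {x y z : V} (f : cV.Hom x y) (g : cV.Hom y z), deg (cV.comp f g) = deg f + deg g) ∧
  (∀ {x y : V} (f : cV.Hom x y) (m n : N), deg f = m + n →
    ∃! p : Σ z : V, cV.Hom x z × cV.Hom z y,
      deg p.2.1 = n ∧ deg p.2.2 = m ∧ cV.comp p.2.1 p.2.2 = f)

/-- The wide subcategory of `cE` on a class of morphisms containing identities and closed
under composition. -/
@[reducible]
def wideSubcat (E : Type u) (cE : Category.{v} E) (W : ∀ x y : E, Set (cE.Hom x y))
    (hid : ∀ x : E, cE.id x ∈ W x x)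
    (hcomp : ∀ {x y z : E} (f : cE.Hom x y) (g : cE.Hom y z),
      f ∈ W x y → g ∈ W y z → cE.comp f g ∈ W x z) :
    Category.{v} E where
  Hom x y := {f : cE.Hom x y // f ∈ W x y}
  id x := ⟨cE.id x, hid x⟩
  comp f g := ⟨cE.comp f.1 g.1, hcomp f.1 g.1 f.2 g.2⟩
  id_comp f := Subtype.ext (cE.id_comp f.1)
  comp_id f := Subtype.ext (cE.comp_id f.1)
  assoc f g h := Subtype.ext (cE.assoc f.1 g.1 h.1)

section Aux

variable {k₁ k₂ : ℕ} {V : Type u} {cV : Category.{v} V}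
  {deg : ∀ ⦃x y : V⦄, cV.Hom x y → (Fin k₁ → ℕ) × (Fin k₂ → ℕ)}

theorem prodeq {α β : Type*} {p : α × β} {a : α} {b : β} (h1 : p.1 = a) (h2 : p.2 = b) :
    p = (a, b) := by cases p; cases h1; cases h2; rfl

theorem sigmk3 {A : Type*} {B C : A → Type*} {a a' : A} {b : B a} {b' : B a'}
    {c : C a} {c' : C a'} (h1 : a = a') (h2 : HEq b b') (h3 : HEq c c') :
    (⟨a, (b, c)⟩ : Σ x, B x × C x) = ⟨a', (b', c')⟩ := by
  subst h1; cases h2; cases h3; rfl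

theorem sigEx3 {A : Type*} {B C : A → Type*} {p q : Σ x : A, B x × C x} (h : p = q) :
    p.1 = q.1 ∧ HEq p.2.1 q.2.1 ∧ HEq p.2.2 q.2.2 := by subst h; exact ⟨rfl, .rfl, .rfl⟩

theorem subheqHom {a a' b b' : V} (P : ∀ {x y : V}, cV.Hom x y → Prop)
    (ha : a = a') (hb : b = b')
    {f : cV.Hom a b} {g : cV.Hom a' b'} (hfg : HEq f g) {pf : P f} {pg : P g} :
    HEq (⟨f, pf⟩ : {h : cV.Hom a b // P h}) (⟨g, pg⟩ : {h : cV.Hom a' b' // P h}) := by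
  subst ha; subst hb; cases hfg; rfl

variable (hkg : IsKGraphDeg V cV deg)

theorem Zfac_ex {z y : V} (f : cV.Hom z y) :
    deg f = ((0 : Fin k₁ → ℕ), (deg f).2) + ((deg f).1, (0 : Fin k₂ → ℕ)) := by
  rw [Prod.mk_add_mk, zero_add, add_zero]

noncomputable def Zfac {z y : V} (f : cV.Hom z y) : Σ w : V, cV.Hom z w × cV.Hom w y :=
  Exists.choose (hkg.2.2 f (0, (deg f).2) ((deg f).1, 0) (Zfac_ex f))

theorem Zfac_spec {z y : V} (f : cV.Hom z y) :
    deg (Zfac hkg f).2.1 = ((deg f).1, 0) ∧ deg (Zfac hkg f).2.2 = (0, (deg f).2) ∧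
      cV.comp (Zfac hkg f).2.1 (Zfac hkg f).2.2 = f :=
  (Exists.choose_spec (hkg.2.2 f (0, (deg f).2) ((deg f).1, 0) (Zfac_ex f))).1

theorem Zfac_mem1 {z y : V} (f : cV.Hom z y) : (deg (Zfac hkg f).2.1).2 = 0 := by
  rw [(Zfac_spec hkg f).1]

theorem Zfac_mem2 {z y : V} (f : cV.Hom z y) : (deg (Zfac hkg f).2.2).1 = 0 := by
  rw [(Zfac_spec hkg f).2.1]

theorem Zfac_unique {z y : V} (f : cV.Hom z y) {w : V} (c : cV.Hom z w) (d : cV.Hom w y)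
    (h1 : (deg c).2 = 0) (h2 : (deg d).1 = 0) (h3 : cV.comp c d = f) :
    Zfac hkg f = ⟨w, (c, d)⟩ := by
  have hdf : deg f = deg c + deg d := by rw [← h3]; exact hkg.2.1 c d
  refine ((Exists.choose_spec (hkg.2.2 f (0, (deg f).2) ((deg f).1, 0) (Zfac_ex f))).2
    ⟨w, (c, d)⟩ ⟨?_, ?_, h3⟩).symm
  · have e1 : (deg c).1 = (deg f).1 := by rw [hdf, Prod.fst_add, h2, add_zero]
    exact prodeq e1 h1
  · have e2 : (deg d).2 = (deg f).2 := by rw [hdf, Prod.snd_add, h1, zero_add]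
    exact prodeq h2 e2

theorem Zfac_eq {z y : V} (f : cV.Hom z y) {w : V} (c : cV.Hom z w) (d : cV.Hom w y)
    (h1 : (deg c).2 = 0) (h2 : (deg d).1 = 0) (h3 : cV.comp c d = f) :
    (Zfac hkg f).1 = w ∧ HEq (Zfac hkg f).2.1 c ∧ HEq (Zfac hkg f).2.2 d :=
  sigEx3 (Zfac_unique hkg f c d h1 h2 h3)

end Aux
section Aux2

variable {k₁ k₂ : ℕ} {V : Type u} {cV : Category.{v} V}
  {deg : ∀ ⦃x y : V⦄, cV.Hom x y → (Fin k₁ → ℕ) × (Fin k₂ → ℕ)}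
  (hidL : ∀ x : V, cV.id x ∈ {f : cV.Hom x x | (deg f).2 = 0})
  (hcompL : ∀ {x y z : V} (f : cV.Hom x y) (g : cV.Hom y z),
      f ∈ {f : cV.Hom x y | (deg f).2 = 0} → g ∈ {g : cV.Hom y z | (deg g).2 = 0} →
      cV.comp f g ∈ {h : cV.Hom x z | (deg h).2 = 0})
  (hidG : ∀ x : V, cV.id x ∈ {f : cV.Hom x x | (deg f).1 = 0})
  (hcompG : ∀ {x y z : V} (f : cV.Hom x y) (g : cV.Hom y z),
      f ∈ {f : cV.Hom x y | (deg f).1 = 0} → g ∈ {g : cV.Hom y z | (deg g).1 = 0} →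
      cV.comp f g ∈ {h : cV.Hom x z | (deg h).1 = 0})

theorem kgL (hkg : IsKGraphDeg V cV deg) : IsKGraphDeg V
    (wideSubcat V cV (fun x y => {f : cV.Hom x y | (deg f).2 = 0}) hidL @hcompL)
    (fun _ _ f => (deg f.val).1) := by
  refine ⟨fun x => ?_, ?_, ?_⟩
  · show (deg (cV.id x)).1 = 0
    rw [hkg.1]; rfl
  · intro x y z f g
    show (deg (cV.comp f.val g.val)).1 = _
    rw [hkg.2.1]; rfl
  · intro x y f m n h
    have hdeg : deg f.val = ((m : Fin k₁ → ℕ), (0 : Fin k₂ → ℕ)) + ((n, 0)) := by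
      rw [Prod.mk_add_mk, add_zero]
      exact prodeq h f.2
    obtain ⟨p, ⟨hn, hm, hc⟩, huniq⟩ := hkg.2.2 f.val (m, 0) (n, 0) hdeg
    have hn2 : (deg p.2.1).2 = 0 := by rw [hn]
    have hm2 : (deg p.2.2).2 = 0 := by rw [hm]
    refine ⟨⟨p.1, (⟨p.2.1, hn2⟩, ⟨p.2.2, hm2⟩)⟩, ⟨?_, ?_, Subtype.ext hc⟩, ?_⟩
    · show (deg p.2.1).1 = n; rw [hn]
    · show (deg p.2.2).1 = m; rw [hm]
    · rintro q ⟨h1, h2, h3⟩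
      have e := huniq ⟨q.1, (q.2.1.val, q.2.2.val)⟩
        ⟨prodeq h1 q.2.1.2, prodeq h2 q.2.2.2, congrArg Subtype.val h3⟩
      have E := sigEx3 e
      exact sigmk3 E.1 (subheqHom (fun f => (deg f).2 = 0) rfl E.1 E.2.1)
        (subheqHom (fun f => (deg f).2 = 0) E.1 rfl E.2.2)

theorem kgG (hkg : IsKGraphDeg V cV deg) : IsKGraphDeg V
    (wideSubcat V cV (fun x y => {f : cV.Hom x y | (deg f).1 = 0}) hidG @hcompG)
    (fun _ _ f => (deg f.val).2) := by
  refine ⟨fun x => ?_, ?_, ?_⟩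
  · show (deg (cV.id x)).2 = 0
    rw [hkg.1]; rfl
  · intro x y z f g
    show (deg (cV.comp f.val g.val)).2 = _
    rw [hkg.2.1]; rfl
  · intro x y f m n h
    have hdeg : deg f.val = ((0 : Fin k₁ → ℕ), (m : Fin k₂ → ℕ)) + ((0, n)) := by
      rw [Prod.mk_add_mk, add_zero]
      exact prodeq f.2 h
    obtain ⟨p, ⟨hn, hm, hc⟩, huniq⟩ := hkg.2.2 f.val (0, m) (0, n) hdeg
    have hn2 : (deg p.2.1).1 = 0 := by rw [hn]
    have hm2 : (deg p.2.2).1 = 0 := by rw [hm]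
    refine ⟨⟨p.1, (⟨p.2.1, hn2⟩, ⟨p.2.2, hm2⟩)⟩, ⟨?_, ?_, Subtype.ext hc⟩, ?_⟩
    · show (deg p.2.1).2 = n; rw [hn]
    · show (deg p.2.2).2 = m; rw [hm]
    · rintro q ⟨h1, h2, h3⟩
      have e := huniq ⟨q.1, (q.2.1.val, q.2.2.val)⟩
        ⟨prodeq q.2.1.2 h1, prodeq q.2.2.2 h2, congrArg Subtype.val h3⟩
      have E := sigEx3 e
      exact sigmk3 E.1 (subheqHom (fun f => (deg f).1 = 0) rfl E.1 E.2.1)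
        (subheqHom (fun f => (deg f).1 = 0) E.1 rfl E.2.2)

end Aux2
section Aux3

variable {k₁ k₂ : ℕ} {V : Type u} {cV : Category.{v} V}
  {deg : ∀ ⦃x y : V⦄, cV.Hom x y → (Fin k₁ → ℕ) × (Fin k₂ → ℕ)}

noncomputable def MP (hkg : IsKGraphDeg V cV deg)
    (hidL : ∀ x : V, cV.id x ∈ {f : cV.Hom x x | (deg f).2 = 0})
    (hcompL : ∀ {x y z : V} (f : cV.Hom x y) (g : cV.Hom y z),
        f ∈ {f : cV.Hom x y | (deg f).2 = 0} → g ∈ {g : cV.Hom y z | (deg g).2 = 0} →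
        cV.comp f g ∈ {h : cV.Hom x z | (deg h).2 = 0})
    (hidG : ∀ x : V, cV.id x ∈ {f : cV.Hom x x | (deg f).1 = 0})
    (hcompG : ∀ {x y z : V} (f : cV.Hom x y) (g : cV.Hom y z),
        f ∈ {f : cV.Hom x y | (deg f).1 = 0} → g ∈ {g : cV.Hom y z | (deg g).1 = 0} →
        cV.comp f g ∈ {h : cV.Hom x z | (deg h).1 = 0}) :
    MatchedPair V (wideSubcat V cV (fun x y => {f : cV.Hom x y | (deg f).2 = 0}) hidL @hcompL)
      (wideSubcat V cV (fun x y => {f : cV.Hom x y | (deg f).1 = 0}) hidG @hcompG) where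
  w {z m y} lam gam := (Zfac hkg (cV.comp gam.val lam.val)).1
  la {z m y} lam gam := ⟨(Zfac hkg (cV.comp gam.val lam.val)).2.2, Zfac_mem2 hkg _⟩
  ra {z m y} lam gam := ⟨(Zfac hkg (cV.comp gam.val lam.val)).2.1, Zfac_mem1 hkg _⟩
  w_id_left {z m} d := by
    have E := Zfac_eq hkg (cV.comp d.val (cV.id m)) (cV.id z) d.val
      (by rw [hkg.1]; rfl) d.2 (by rw [cV.id_comp, cV.comp_id])
    exact E.1
  la_id_left {z m} d := by
    have E := Zfac_eq hkg (cV.comp d.val (cV.id m)) (cV.id z) d.val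
      (by rw [hkg.1]; rfl) d.2 (by rw [cV.id_comp, cV.comp_id])
    exact subheqHom (fun f => (deg f).1 = 0) E.1 rfl E.2.2
  ra_id_left {z m} d := by
    have E := Zfac_eq hkg (cV.comp d.val (cV.id m)) (cV.id z) d.val
      (by rw [hkg.1]; rfl) d.2 (by rw [cV.id_comp, cV.comp_id])
    exact subheqHom (fun f => (deg f).2 = 0) rfl E.1 E.2.1
  w_id_right {m y} c := by
    have E := Zfac_eq hkg (cV.comp (cV.id m) c.val) c.val (cV.id y)
      c.2 (by rw [hkg.1]; rfl) (by rw [cV.comp_id, cV.id_comp])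
    exact E.1
  la_id_right {m y} c := by
    have E := Zfac_eq hkg (cV.comp (cV.id m) c.val) c.val (cV.id y)
      c.2 (by rw [hkg.1]; rfl) (by rw [cV.comp_id, cV.id_comp])
    exact subheqHom (fun f => (deg f).1 = 0) E.1 rfl E.2.2
  ra_id_right {m y} c := by
    have E := Zfac_eq hkg (cV.comp (cV.id m) c.val) c.val (cV.id y)
      c.2 (by rw [hkg.1]; rfl) (by rw [cV.comp_id, cV.id_comp])
    exact subheqHom (fun f => (deg f).2 = 0) rfl E.1 E.2.1
  w_comp_left {z m k y} c₁ c₂ d := by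
    have E := Zfac_eq hkg (cV.comp d.val (cV.comp c₂.val c₁.val))
      (cV.comp (Zfac hkg (cV.comp d.val c₂.val)).2.1
        (Zfac hkg (cV.comp (Zfac hkg (cV.comp d.val c₂.val)).2.2 c₁.val)).2.1)
      (Zfac hkg (cV.comp (Zfac hkg (cV.comp d.val c₂.val)).2.2 c₁.val)).2.2
      (by rw [hkg.2.1, Prod.snd_add, Zfac_mem1 hkg, Zfac_mem1 hkg, add_zero])
      (Zfac_mem2 hkg _)
      (by rw [cV.assoc, (Zfac_spec hkg (cV.comp (Zfac hkg (cV.comp d.val c₂.val)).2.2 c₁.val)).2.2,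
              ← cV.assoc, (Zfac_spec hkg (cV.comp d.val c₂.val)).2.2, cV.assoc])
    exact E.1
  la_comp_left {z m k y} c₁ c₂ d := by
    have E := Zfac_eq hkg (cV.comp d.val (cV.comp c₂.val c₁.val))
      (cV.comp (Zfac hkg (cV.comp d.val c₂.val)).2.1
        (Zfac hkg (cV.comp (Zfac hkg (cV.comp d.val c₂.val)).2.2 c₁.val)).2.1)
      (Zfac hkg (cV.comp (Zfac hkg (cV.comp d.val c₂.val)).2.2 c₁.val)).2.2
      (by rw [hkg.2.1, Prod.snd_add, Zfac_mem1 hkg, Zfac_mem1 hkg, add_zero])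
      (Zfac_mem2 hkg _)
      (by rw [cV.assoc, (Zfac_spec hkg (cV.comp (Zfac hkg (cV.comp d.val c₂.val)).2.2 c₁.val)).2.2,
              ← cV.assoc, (Zfac_spec hkg (cV.comp d.val c₂.val)).2.2, cV.assoc])
    exact subheqHom (fun f => (deg f).1 = 0) E.1 rfl E.2.2
  ra_comp_left {z m k y} c₁ c₂ d := by
    have E := Zfac_eq hkg (cV.comp d.val (cV.comp c₂.val c₁.val))
      (cV.comp (Zfac hkg (cV.comp d.val c₂.val)).2.1
        (Zfac hkg (cV.comp (Zfac hkg (cV.comp d.val c₂.val)).2.2 c₁.val)).2.1)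
      (Zfac hkg (cV.comp (Zfac hkg (cV.comp d.val c₂.val)).2.2 c₁.val)).2.2
      (by rw [hkg.2.1, Prod.snd_add, Zfac_mem1 hkg, Zfac_mem1 hkg, add_zero])
      (Zfac_mem2 hkg _)
      (by rw [cV.assoc, (Zfac_spec hkg (cV.comp (Zfac hkg (cV.comp d.val c₂.val)).2.2 c₁.val)).2.2,
              ← cV.assoc, (Zfac_spec hkg (cV.comp d.val c₂.val)).2.2, cV.assoc])
    exact subheqHom (fun f => (deg f).2 = 0) rfl E.1 E.2.1
  w_comp_right {z k m y} c d₁ d₂ := by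
    have E := Zfac_eq hkg (cV.comp (cV.comp d₂.val d₁.val) c.val)
      (Zfac hkg (cV.comp d₂.val (Zfac hkg (cV.comp d₁.val c.val)).2.1)).2.1
      (cV.comp (Zfac hkg (cV.comp d₂.val (Zfac hkg (cV.comp d₁.val c.val)).2.1)).2.2
        (Zfac hkg (cV.comp d₁.val c.val)).2.2)
      (Zfac_mem1 hkg _)
      (by rw [hkg.2.1, Prod.fst_add, Zfac_mem2 hkg, Zfac_mem2 hkg, add_zero])
      (by rw [← cV.assoc, (Zfac_spec hkg (cV.comp d₂.val (Zfac hkg (cV.comp d₁.val c.val)).2.1)).2.2,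
              cV.assoc, (Zfac_spec hkg (cV.comp d₁.val c.val)).2.2, ← cV.assoc])
    exact E.1
  la_comp_right {z k m y} c d₁ d₂ := by
    have E := Zfac_eq hkg (cV.comp (cV.comp d₂.val d₁.val) c.val)
      (Zfac hkg (cV.comp d₂.val (Zfac hkg (cV.comp d₁.val c.val)).2.1)).2.1
      (cV.comp (Zfac hkg (cV.comp d₂.val (Zfac hkg (cV.comp d₁.val c.val)).2.1)).2.2
        (Zfac hkg (cV.comp d₁.val c.val)).2.2)
      (Zfac_mem1 hkg _)
      (by rw [hkg.2.1, Prod.fst_add, Zfac_mem2 hkg, Zfac_mem2 hkg, add_zero])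
      (by rw [← cV.assoc, (Zfac_spec hkg (cV.comp d₂.val (Zfac hkg (cV.comp d₁.val c.val)).2.1)).2.2,
              cV.assoc, (Zfac_spec hkg (cV.comp d₁.val c.val)).2.2, ← cV.assoc])
    exact subheqHom (fun f => (deg f).1 = 0) E.1 rfl E.2.2
  ra_comp_right {z k m y} c d₁ d₂ := by
    have E := Zfac_eq hkg (cV.comp (cV.comp d₂.val d₁.val) c.val)
      (Zfac hkg (cV.comp d₂.val (Zfac hkg (cV.comp d₁.val c.val)).2.1)).2.1
      (cV.comp (Zfac hkg (cV.comp d₂.val (Zfac hkg (cV.comp d₁.val c.val)).2.1)).2.2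
        (Zfac hkg (cV.comp d₁.val c.val)).2.2)
      (Zfac_mem1 hkg _)
      (by rw [hkg.2.1, Prod.fst_add, Zfac_mem2 hkg, Zfac_mem2 hkg, add_zero])
      (by rw [← cV.assoc, (Zfac_spec hkg (cV.comp d₂.val (Zfac hkg (cV.comp d₁.val c.val)).2.1)).2.2,
              cV.assoc, (Zfac_spec hkg (cV.comp d₁.val c.val)).2.2, ← cV.assoc])
    exact subheqHom (fun f => (deg f).2 = 0) rfl E.1 E.2.1

end Aux3
/-- **Statement 7.** Let `Σ` be a `(k₁+k₂)`-graph (degree map into `ℕ^{k₁} × ℕ^{k₂}`).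
Then the classes `Λ` (degree in `ℕ^{k₁} × {0}`) and `Γ` (degree in `{0} × ℕ^{k₂}`) are wide
subcategories; `Λ` is a `k₁`-graph and `Γ` is a `k₂`-graph; there are unique actions
`◁`, `▷` with `λ ∘ γ = (λ ◁ γ) ∘ (λ ▷ γ)`; these form a matched pair; `(γ, λ) ↦ γ ∘ λ` is an
isomorphism of categories `Λ ⋈ Γ ≅ Σ`; and `d(λ ◁ γ) = d(γ)`, `d(λ ▷ γ) = d(λ)`. -/
theorem kGraph_as_zappaSzep (k₁ k₂ : ℕ) (V : Type u) (cV : Category.{v} V)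
    (deg : ∀ ⦃x y : V⦄, cV.Hom x y → (Fin k₁ → ℕ) × (Fin k₂ → ℕ))
    (hkg : IsKGraphDeg V cV deg) :
    -- `Λ` and `Γ` are wide subcategories:
    (∀ x : V, (deg (cV.id x)).2 = 0) ∧
    (∀ {x y z : V} (f : cV.Hom x y) (g : cV.Hom y z),
        (deg f).2 = 0 → (deg g).2 = 0 → (deg (cV.comp f g)).2 = 0) ∧
    (∀ x : V, (deg (cV.id x)).1 = 0) ∧
    (∀ {x y z : V} (f : cV.Hom x y) (g : cV.Hom y z),
        (deg f).1 = 0 → (deg g).1 = 0 → (deg (cV.comp f g)).1 = 0) ∧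
    -- and, regarding them as categories `cL` and `cG`:
    (∀ (hidL : ∀ x : V, cV.id x ∈ {f : cV.Hom x x | (deg f).2 = 0})
       (hcompL : ∀ {x y z : V} (f : cV.Hom x y) (g : cV.Hom y z),
          f ∈ {f : cV.Hom x y | (deg f).2 = 0} → g ∈ {g : cV.Hom y z | (deg g).2 = 0} →
          cV.comp f g ∈ {h : cV.Hom x z | (deg h).2 = 0})
       (hidG : ∀ x : V, cV.id x ∈ {f : cV.Hom x x | (deg f).1 = 0})
       (hcompG : ∀ {x y z : V} (f : cV.Hom x y) (g : cV.Hom y z),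
          f ∈ {f : cV.Hom x y | (deg f).1 = 0} → g ∈ {g : cV.Hom y z | (deg g).1 = 0} →
          cV.comp f g ∈ {h : cV.Hom x z | (deg h).1 = 0}),
      let cL := wideSubcat V cV (fun x y => {f : cV.Hom x y | (deg f).2 = 0}) hidL @hcompL
      let cG := wideSubcat V cV (fun x y => {f : cV.Hom x y | (deg f).1 = 0}) hidG @hcompG
      -- `Λ` is a `k₁`-graph and `Γ` is a `k₂`-graph:
      IsKGraphDeg V cL (fun _ _ f => (deg f.val).1) ∧
      IsKGraphDeg V cG (fun _ _ f => (deg f.val).2) ∧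
      -- unique actions `◁, ▷` with `λ ∘ γ = (λ ◁ γ) ∘ (λ ▷ γ)`:
      (∃! F : ∀ (z m y : V), cL.Hom m y → cG.Hom z m → Σ w : V, cG.Hom w y × cL.Hom z w,
        ∀ (z m y : V) (lam : cL.Hom m y) (gam : cG.Hom z m),
          cV.comp gam.val lam.val =
            cV.comp (F z m y lam gam).2.2.val (F z m y lam gam).2.1.val) ∧
      -- these actions form a matched pair, `(γ, λ) ↦ γ ∘ λ` is an isomorphism of categories
      -- `Λ ⋈ Γ ≅ Σ`, and degrees are preserved as stated:
      (∃ M : MatchedPair V cL cG,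
        (∀ {z m y : V} (lam : cL.Hom m y) (gam : cG.Hom z m),
          cV.comp gam.val lam.val =
            cV.comp (M.ra lam gam).val (M.la lam gam).val) ∧
        (∀ x : V, cV.comp ((M.zsId x).2.2).val ((M.zsId x).2.1).val = cV.id x) ∧
        (∀ {z m y : V} (f : M.ZSHom m y) (g : M.ZSHom z m),
          cV.comp ((M.zsComp f g).2.2).val ((M.zsComp f g).2.1).val =
            cV.comp (cV.comp (g.2.2).val (g.2.1).val) (cV.comp (f.2.2).val (f.2.1).val)) ∧
        (∀ z y : V, Function.Bijective
          (fun f : M.ZSHom z y => cV.comp (f.2.2).val (f.2.1).val)) ∧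
        (∀ {z m y : V} (lam : cL.Hom m y) (gam : cG.Hom z m),
          deg (M.la lam gam).val = deg gam.val ∧
          deg (M.ra lam gam).val = deg lam.val))) := by
  refine ⟨fun x => by rw [hkg.1]; rfl, ?_, fun x => by rw [hkg.1]; rfl, ?_, ?_⟩
  · intro x y z f g hf hg
    rw [hkg.2.1, Prod.snd_add, hf, hg, add_zero]
  · intro x y z f g hf hg
    rw [hkg.2.1, Prod.fst_add, hf, hg, add_zero]
  intro hidL hcompL hidG hcompG cL cG
  refine ⟨kgL hidL @hcompL hkg, kgG hidG @hcompG hkg, ?_, ?_⟩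
  · -- unique actions
    set M := MP hkg hidL @hcompL hidG @hcompG with hM
    refine ⟨fun z m y lam gam => ⟨M.w lam gam, (M.la lam gam, M.ra lam gam)⟩,
      fun z m y lam gam => ((Zfac_spec hkg (cV.comp gam.val lam.val)).2.2).symm, ?_⟩
    intro G hG
    funext z m y lam gam
    have e := Zfac_unique hkg (cV.comp gam.val lam.val)
      (G z m y lam gam).2.2.val (G z m y lam gam).2.1.val
      (G z m y lam gam).2.2.2 (G z m y lam gam).2.1.2 (hG z m y lam gam).symm
    have E := sigEx3 e
    exact sigmk3 E.1.symm (subheqHom (fun f => (deg f).1 = 0) E.1.symm rfl E.2.2.symm)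
      (subheqHom (fun f => (deg f).2 = 0) rfl E.1.symm E.2.1.symm)
  · refine ⟨MP hkg hidL @hcompL hidG @hcompG,
      fun {z m y} lam gam => ((Zfac_spec hkg (cV.comp gam.val lam.val)).2.2).symm,
      fun x => cV.id_comp (cV.id x), ?_, ?_, ?_⟩
    · intro z m y f g
      have key : cV.comp ((MP hkg hidL @hcompL hidG @hcompG).ra f.2.2 g.2.1).val
          ((MP hkg hidL @hcompL hidG @hcompG).la f.2.2 g.2.1).val
          = cV.comp g.2.1.val f.2.2.val :=
        (Zfac_spec hkg (cV.comp g.2.1.val f.2.2.val)).2.2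
      show cV.comp (cV.comp g.2.2.val _) (cV.comp _ f.2.1.val) = _
      exact (cV.assoc _ _ _).trans ((congrArg (cV.comp g.2.2.val)
        (((cV.assoc _ _ _).symm.trans (congrArg (fun t => cV.comp t f.2.1.val) key)).trans
          (cV.assoc _ _ _))).trans (cV.assoc _ _ _).symm)
    · intro z y
      constructor
      · intro f g hfg
        have ef := Zfac_unique hkg (cV.comp f.2.2.val f.2.1.val)
          f.2.2.val f.2.1.val f.2.2.2 f.2.1.2 rfl
        have eg : Zfac hkg (cV.comp f.2.2.val f.2.1.val) = ⟨g.1, (g.2.2.val, g.2.1.val)⟩ := by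
          rw [show cV.comp f.2.2.val f.2.1.val = cV.comp g.2.2.val g.2.1.val from hfg]
          exact Zfac_unique hkg _ g.2.2.val g.2.1.val g.2.2.2 g.2.1.2 rfl
        have E := sigEx3 (ef.symm.trans eg)
        exact sigmk3 E.1 (subheqHom (fun f => (deg f).1 = 0) E.1 rfl E.2.2)
          (subheqHom (fun f => (deg f).2 = 0) rfl E.1 E.2.1)
      · intro h
        exact ⟨⟨(Zfac hkg h).1, (⟨(Zfac hkg h).2.2, Zfac_mem2 hkg h⟩,
          ⟨(Zfac hkg h).2.1, Zfac_mem1 hkg h⟩)⟩, (Zfac_spec hkg h).2.2⟩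
    · intro z m y lam gam
      have hl2 : (deg lam.val).2 = 0 := lam.2
      have hg1 : (deg gam.val).1 = 0 := gam.2
      constructor
      · show deg (Zfac hkg (cV.comp gam.val lam.val)).2.2 = deg gam.val
        rw [(Zfac_spec hkg (cV.comp gam.val lam.val)).2.1, hkg.2.1]
        have e2 : (deg gam.val).2 = (deg gam.val + deg lam.val).2 := by
          rw [Prod.snd_add, hl2, add_zero]
        exact (prodeq hg1 e2).symm
      · show deg (Zfac hkg (cV.comp gam.val lam.val)).2.1 = deg lam.val
        rw [(Zfac_spec hkg (cV.comp gam.val lam.val)).1, hkg.2.1]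
        have e1 : (deg lam.val).1 = (deg gam.val + deg lam.val).1 := by
          rw [Prod.fst_add, hg1, zero_add]
        exact (prodeq e1 hl2).symm
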